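/- Let Γ be a discrete subring of ℂ containing 1, let z ∈ ℂ' and let (a_n)_{n≥0} be a continued fraction expansion of z over Γ with iteration sequence (z_n) and Q-pair (p_n), (q_n). An infinite neat subset for the expansion exists if any one of the following holds: (i) |q_{n−1}| ≤ |q_n| for all n ∈ ℕ; (ii) liminf_{n∈ℕ} |z_{n+1}| > 1; (iii) the expansion is given by a Γ-valued continued fraction algorithm f for which there exists r ∈ (0,1) with |ζ − f(ζ)| < r for all ζ ∈ ℂ. Moreover, if the conditions in (i) and (iii) both hold, then the whole of ℕ is a neat subset. -/

import Mathlib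

/-- The quotient field of a subring `Γ` of `ℂ`, as a subset of `ℂ`. -/
def quotField (Γ : Subring ℂ) : Set ℂ :=
  {x | ∃ p ∈ Γ, ∃ q ∈ Γ, q ≠ 0 ∧ x = p / q}

/-- `(a n)` is a continued fraction expansion of `z` over `Γ`, with iteration
sequence `(zs n)`: `zs 0 = z`, `0 < |zs n - a n| < 1` and `zs (n+1) = (zs n - a n)⁻¹`. -/
def IsCFE (Γ : Subring ℂ) (z : ℂ) (a zs : ℕ → ℂ) : Prop :=
  (∀ n, a n ∈ Γ) ∧ zs 0 = z ∧
    (∀ n, 0 < Norm.norm (zs n - a n) ∧ Norm.norm (zs n - a n) < 1) ∧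
    (∀ n, zs (n + 1) = (zs n - a n)⁻¹)

/-- The Q-pair of a sequence of partial quotients, with indices shifted by one:
`p (n+1)` is the paper's `p_n` and `q (n+1)` is the paper's `q_n`
(so `p 0 = p_{-1} = 1` and `q 0 = q_{-1} = 0`). -/
def IsQPair (a p q : ℕ → ℂ) : Prop :=
  p 0 = 1 ∧ p 1 = a 0 ∧ (∀ n, p (n + 2) = a (n + 1) * p (n + 1) + p n) ∧
  q 0 = 0 ∧ q 1 = 1 ∧ (∀ n, q (n + 2) = a (n + 1) * q (n + 1) + q n)


/-- The sequence of relative errors `δ_n = q_n (q_n z - p_n)` (index shifted by one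
in `p`, `q`, so `relErr z p q n` is the paper's `δ_n`). -/
def relErr (z : ℂ) (p q : ℕ → ℂ) (n : ℕ) : ℂ :=
  q (n + 1) * (q (n + 1) * z - p (n + 1))

/-- `N ⊆ ℕ` is a neat subset for the expansion: `|q_{n-1}| ≤ |q_n|` for all `n ∈ N`
and `liminf_{n ∈ N} |z_{n+1}| > 1` (there is `α > 1` with `|z_{n+1}| ≥ α` for all but
finitely many `n ∈ N`). Indices of `q` are shifted by one, so `q n` is the paper's `q_{n-1}`. -/
def IsNeat (zs q : ℕ → ℂ) (N : Set ℕ) : Prop :=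
  (∀ n ∈ N, Norm.norm (q n) ≤ Norm.norm (q (n + 1))) ∧
  ∃ α : ℝ, 1 < α ∧ {n | n ∈ N ∧ Norm.norm (zs (n + 1)) < α}.Finite


section Aux

open Filter Set Metric Topology


lemma discrete_finite_ball_aux (Γ : Subring ℂ) (hdisc : DiscreteTopology Γ) (R : ℝ) :
    {γ : ℂ | γ ∈ Γ ∧ Norm.norm γ ≤ R}.Finite := by
  have hd2 : DiscreteTopology (↑(Γ : Set ℂ) : Type) := hdisc
  have hd3 : DiscreteTopology (Γ.toAddSubgroup : Set ℂ) := hdisc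
  have hclosed : IsClosed (Γ : Set ℂ) := by
    have := @AddSubgroup.isClosed_of_discrete ℂ _ _ _ _ Γ.toAddSubgroup hd3
    exact this
  have hsub : {γ : ℂ | γ ∈ Γ ∧ Norm.norm γ ≤ R} = (Γ : Set ℂ) ∩ closedBall 0 R := by
    ext γ
    simp [Complex.dist_eq]
  rw [hsub]
  have hcpt : IsCompact ((Γ : Set ℂ) ∩ closedBall 0 R) :=
    (isCompact_closedBall 0 R).inter_left hclosed
  exact hcpt.finite (isDiscrete_iff_discreteTopology.mpr (DiscreteTopology.of_subset hd2 inter_subset_left))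


lemma gap_lemma_aux {F : Set ℂ} (hF : F.Finite) :
    ∃ γ : ℝ, 0 < γ ∧ ∀ u ∈ F, ∀ v ∈ F, dist u v < γ → u = v := by
  classical
  set D : Set ℝ := {d : ℝ | ∃ u ∈ F, ∃ v ∈ F, u ≠ v ∧ d = dist u v} with hD
  have hDfin : D.Finite := by
    apply Set.Finite.subset ((hF.prod hF).image (fun p => dist p.1 p.2))
    rintro d ⟨u, hu, v, hv, huv, rfl⟩
    exact ⟨(u, v), ⟨hu, hv⟩, rfl⟩
  rcases D.eq_empty_or_nonempty with hE | hNE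
  · refine ⟨1, one_pos, fun u hu v hv _ => ?_⟩
    by_contra hne
    have : dist u v ∈ D := ⟨u, hu, v, hv, hne, rfl⟩
    simp [hE] at this
  · obtain ⟨d₀, hd₀mem, hd₀min⟩ := Set.exists_min_image D id hDfin hNE
    obtain ⟨u, hu, v, hv, huv, rfl⟩ := hd₀mem
    refine ⟨dist u v, dist_pos.mpr huv, fun u' hu' v' hv' hlt => ?_⟩
    by_contra hne
    exact absurd (hd₀min _ ⟨u', hu', v', hv', hne, rfl⟩) (not_le.mpr hlt)

lemma pigeonhole_infinite_aux {f : ℕ → ℂ} {s : Set ℕ} (hs : s.Infinite) {t : Set ℂ}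
    (ht : t.Finite) (hmaps : ∀ n ∈ s, f n ∈ t) :
    ∃ b ∈ t, {n | n ∈ s ∧ f n = b}.Infinite := by
  by_contra h
  push_neg at h
  have : s ⊆ ⋃ b ∈ t, {n | n ∈ s ∧ f n = b} := by
    intro n hn
    exact Set.mem_biUnion (hmaps n hn) ⟨hn, rfl⟩
  have hfin : (⋃ b ∈ t, {n | n ∈ s ∧ f n = b}).Finite := by
    refine Set.Finite.biUnion ht fun b hb => ?_
    have := h b hb
    exact this
  exact hs (hfin.subset this)


lemma circle_inter_finite_aux {b : ℂ} (hb : b ≠ 0) :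
    {x : ℂ | Norm.norm x = 1 ∧ Norm.norm (x - b) = 1}.Finite := by
  classical
  set c : ℝ := Complex.normSq b / 2 with hc
  set s : ℝ := Real.sqrt (Complex.normSq b - c ^ 2) with hs
  have hconj : (starRingEnd ℂ) b ≠ 0 := by simpa using hb
  have hfin : ({(⟨c, s⟩ : ℂ) / (starRingEnd ℂ) b, (⟨c, -s⟩ : ℂ) / (starRingEnd ℂ) b} :
      Set ℂ).Finite := (Set.finite_singleton _).insert _
  apply Set.Finite.subset hfin
  rintro x ⟨hx1, hx2⟩
  have hn1 : Complex.normSq x = 1 := by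
    have := congrArg (· ^ 2) hx1
    simpa [Complex.sq_norm] using this
  have hn2 : Complex.normSq (x - b) = 1 := by
    have := congrArg (· ^ 2) hx2
    simpa [Complex.sq_norm] using this
  rw [Complex.normSq_sub, hn1] at hn2
  have hre : (x * (starRingEnd ℂ) b).re = c := by
    rw [hc]; linarith
  have hyabs : Complex.normSq (x * (starRingEnd ℂ) b) = Complex.normSq b := by
    rw [Complex.normSq_mul, hn1, Complex.normSq_conj, one_mul]
  have him : (x * (starRingEnd ℂ) b).im ^ 2 = Complex.normSq b - c ^ 2 := by
    have h0 := Complex.normSq_apply (x * (starRingEnd ℂ) b)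
    rw [hyabs, hre] at h0
    nlinarith [h0]
  have hsq : (x * (starRingEnd ℂ) b).im = s ∨ (x * (starRingEnd ℂ) b).im = -s := by
    have h1 : s ^ 2 = Complex.normSq b - c ^ 2 := by
      rw [hs, sq, Real.mul_self_sqrt]
      nlinarith [him, sq_nonneg ((x * (starRingEnd ℂ) b).im)]
    have h2 : (x * (starRingEnd ℂ) b).im ^ 2 = s ^ 2 := by rw [him, h1]
    have h3 : ((x * (starRingEnd ℂ) b).im - s) * ((x * (starRingEnd ℂ) b).im + s) = 0 := by
      nlinarith [h2]
    rcases mul_eq_zero.mp h3 with h | h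
    · exact Or.inl (by linarith)
    · exact Or.inr (by linarith)
  have hxeq : x = (x * (starRingEnd ℂ) b) / (starRingEnd ℂ) b := by
    field_simp
  rcases hsq with h | h
  · apply Set.mem_insert_iff.mpr; left
    rw [hxeq]
    congr 1
    exact Complex.ext hre h
  · apply Set.mem_insert_iff.mpr; right
    rw [Set.mem_singleton_iff, hxeq]
    congr 1
    exact Complex.ext hre h

lemma qmono_infinite_aux (Γ : Subring ℂ) (hdisc : DiscreteTopology Γ) (a q : ℕ → ℂ)
    (ha : ∀ n, a n ∈ Γ) (hq0 : q 0 = 0) (hq1 : q 1 = 1)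
    (hqrec : ∀ n, q (n + 2) = a (n + 1) * q (n + 1) + q n) :
    {n : ℕ | Norm.norm (q n) ≤ Norm.norm (q (n + 1))}.Infinite := by
  have hqΓ : ∀ n, q n ∈ Γ := by
    have key : ∀ n, q n ∈ Γ ∧ q (n + 1) ∈ Γ := by
      intro n
      induction n with
      | zero => exact ⟨by rw [hq0]; exact zero_mem Γ, by rw [hq1]; exact one_mem Γ⟩
      | succ n ih => exact ⟨ih.2, by rw [hqrec]; exact add_mem (mul_mem (ha _) ih.2) ih.1⟩
    exact fun n => (key n).1
  by_contra hinf
  rw [Set.not_infinite] at hinf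
  obtain ⟨M, hM⟩ := hinf.bddAbove
  have hdec : ∀ k : ℕ, Norm.norm (q (M + 1 + k + 1)) < Norm.norm (q (M + 1 + k)) := by
    intro k
    by_contra h
    push_neg at h
    have : M + 1 + k ≤ M := hM (by exact h)
    omega
  have hanti : StrictAnti (fun k => Norm.norm (q (M + 1 + k))) := by
    apply strictAnti_nat_of_succ_lt
    intro k
    exact hdec k
  have hinj : Function.Injective (fun k => q (M + 1 + k)) := by
    intro i j hij
    by_contra hne
    rcases lt_or_gt_of_ne hne with h | h
    · exact absurd (congrArg Norm.norm hij) (ne_of_gt (hanti h))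
    · exact absurd (congrArg Norm.norm hij) (ne_of_lt (hanti h))
  have hbound : ∀ k, Norm.norm (q (M + 1 + k)) ≤ Norm.norm (q (M + 1)) := by
    intro k
    have := hanti.antitone (Nat.zero_le k)
    simpa using this
  have hsubset : Set.range (fun k => q (M + 1 + k)) ⊆
      {γ : ℂ | γ ∈ Γ ∧ Norm.norm γ ≤ Norm.norm (q (M + 1))} := by
    rintro x ⟨k, rfl⟩
    exact ⟨hqΓ _, hbound k⟩
  have hrinf : (Set.range (fun k => q (M + 1 + k))).Infinite :=
    Set.infinite_range_of_injective hinj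
  exact hrinf ((discrete_finite_ball_aux Γ hdisc _).subset hsubset)

lemma no_shrink_aux (Γ : Subring ℂ) (hdisc : DiscreteTopology Γ) (a zs : ℕ → ℂ)
    (haΓ : ∀ n, a n ∈ Γ)
    (habs : ∀ n, 0 < Norm.norm (zs n - a n) ∧ Norm.norm (zs n - a n) < 1)
    (hrec : ∀ n, zs (n + 1) = (zs n - a n)⁻¹) :
    ∃ ε : ℝ, 0 < ε ∧ {n : ℕ | 1 + ε ≤ Norm.norm (zs (n + 1))}.Infinite := by
  classical
  set x : ℕ → ℂ := fun n => zs (n + 1) with hxdef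
  set b : ℕ → ℂ := fun n => a (n + 1) with hbdef
  have hx1 : ∀ n, 1 < Norm.norm (x n) := by
    intro n
    have : x n = (zs n - a n)⁻¹ := hrec n
    rw [this, norm_inv]
    exact (one_lt_inv₀ (habs n).1).mpr (habs n).2
  have hxrec : ∀ n, x (n + 1) = (x n - b n)⁻¹ := fun n => hrec (n + 1)
  have hxb_pos : ∀ n, 0 < Norm.norm (x n - b n) := fun n => (habs (n + 1)).1
  have hxb_lt : ∀ n, Norm.norm (x n - b n) < 1 := fun n => (habs (n + 1)).2
  have hxb_ne : ∀ n, x n - b n ≠ 0 := fun n => by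
    intro h; exact absurd (by rw [h]; simp : Norm.norm (x n - b n) = 0) (ne_of_gt (hxb_pos n))
  have hxb_eq : ∀ n, Norm.norm (x n - b n) = (Norm.norm (x (n + 1)))⁻¹ := by
    intro n
    rw [hxrec n, norm_inv, inv_inv]
  have hb_ne : ∀ n, b n ≠ 0 := by
    intro n h
    have h1 : Norm.norm (x (n + 1)) = (Norm.norm (x n))⁻¹ := by
      rw [hxrec n, h, sub_zero, norm_inv]
    have h2 := hx1 (n + 1)
    rw [h1] at h2
    have := hx1 n
    have : (Norm.norm (x n))⁻¹ < 1 := by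
      rw [inv_lt_one_iff₀]; right; exact this
    linarith
  -- contradiction setup
  by_contra hcon
  push_neg at hcon
  have hfin : ∀ ε : ℝ, 0 < ε → {n : ℕ | 1 + ε ≤ Norm.norm (x n)}.Finite := by
    intro ε hε
    have := hcon ε hε
    exact this
  have hev1 : ∀ ε : ℝ, 0 < ε → ∀ᶠ n in atTop, Norm.norm (x n) < 1 + ε := by
    intro ε hε
    obtain ⟨M, hM⟩ := (hfin ε hε).bddAbove
    rw [eventually_atTop]
    refine ⟨M + 1, fun n hn => ?_⟩
    by_contra h
    push_neg at h
    have : n ≤ M := hM h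
    omega
  have ht : Tendsto (fun n => Norm.norm (x n)) atTop (𝓝 1) := by
    rw [Metric.tendsto_atTop]
    intro ε hε
    have := (hev1 ε hε).and (Filter.Eventually.of_forall hx1)
    rw [eventually_atTop] at this
    obtain ⟨N, hN⟩ := this
    refine ⟨N, fun n hn => ?_⟩
    have h1 := (hN n hn).1
    have h2 := (hN n hn).2
    rw [Real.dist_eq, abs_of_pos (by linarith)]
    linarith
  have htb : Tendsto (fun n => Norm.norm (x n - b n)) atTop (𝓝 1) := by
    have h1 : Tendsto (fun n => Norm.norm (x (n + 1))) atTop (𝓝 1) :=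
      ht.comp (tendsto_add_atTop_nat 1)
    have h2 := h1.inv₀ one_ne_zero
    simp only [inv_one] at h2
    refine h2.congr fun n => ?_
    rw [hxb_eq n]
  -- eventual bounds
  have hxev2 : ∀ᶠ n in atTop, Norm.norm (x n) ≤ 2 := by
    filter_upwards [hev1 (1/2) (by norm_num)] with n hn
    linarith
  have hbB : ∀ᶠ n in atTop, Norm.norm (b n) ≤ 5/2 := by
    filter_upwards [hev1 (1/2) (by norm_num)] with n hn
    have heq : Norm.norm (b n) = Norm.norm (x n - (x n - b n)) := by congr 1; ring
    have htri : Norm.norm (x n - (x n - b n)) ≤ Norm.norm (x n) + Norm.norm (x n - b n) := by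
      simpa using norm_sub_le (x n) (x n - b n)
    have := hxb_lt n
    rw [heq]
    linarith
  set B' : Set ℂ := {γ : ℂ | (γ ∈ Γ ∧ γ ≠ 0) ∧ Norm.norm γ ≤ 5/2} with hB'def
  have hB'fin : B'.Finite := by
    apply (discrete_finite_ball_aux Γ hdisc (5/2)).subset
    rintro γ ⟨⟨h1, _⟩, h2⟩
    exact ⟨h1, h2⟩
  have hbB' : ∀ᶠ n in atTop, b n ∈ B' := by
    filter_upwards [hbB] with n hn
    exact ⟨⟨haΓ (n + 1), hb_ne n⟩, hn⟩
  -- the key approximation claim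
  have hD : ∀ δ : ℝ, 0 < δ → ∀ᶠ n in atTop,
      ∃ ξ : ℂ, Norm.norm ξ = 1 ∧ Norm.norm (ξ - b n) = 1 ∧ dist (x n) ξ < δ := by
    intro δ hδ
    by_contra hcf
    have hfreq : ∃ᶠ n in atTop, ∀ ξ : ℂ, Norm.norm ξ = 1 → Norm.norm (ξ - b n) = 1 →
        δ ≤ dist (x n) ξ := by
      rw [Filter.not_eventually] at hcf
      refine hcf.mono fun n hn => ?_
      push_neg at hn
      exact hn
    have hfreq2 := hfreq.and_eventually (hbB'.and hxev2)
    have hinfT : {n : ℕ | (∀ ξ : ℂ, Norm.norm ξ = 1 → Norm.norm (ξ - b n) = 1 →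
        δ ≤ dist (x n) ξ) ∧ b n ∈ B' ∧ Norm.norm (x n) ≤ 2}.Infinite := by
      rw [← Nat.frequently_atTop_iff_infinite]
      refine hfreq2.mono fun n hn => ?_
      exact ⟨hn.1, hn.2.1, hn.2.2⟩
    obtain ⟨bs, hbsB, hTinf⟩ := pigeonhole_infinite_aux hinfT hB'fin (fun n hn => hn.2.1)
    have hfreqT := Nat.frequently_atTop_iff_infinite.mpr hTinf
    obtain ⟨φ, hφmono, hφmem⟩ := Filter.extraction_of_frequently_atTop hfreqT
    have hmemball : ∀ k, x (φ k) ∈ Metric.closedBall (0 : ℂ) 2 := by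
      intro k
      rw [Metric.mem_closedBall, Complex.dist_eq, sub_zero]
      exact (hφmem k).1.2.2
    obtain ⟨xstar, hxstar, ψ, hψmono, hψconv⟩ :=
      (isCompact_closedBall (0 : ℂ) 2).tendsto_subseq hmemball
    set θ : ℕ → ℕ := φ ∘ ψ with hθdef
    have hθmono : StrictMono θ := hφmono.comp hψmono
    have hθT : ∀ k, (∀ ξ : ℂ, Norm.norm ξ = 1 → Norm.norm (ξ - b (θ k)) = 1 →
        δ ≤ dist (x (θ k)) ξ) ∧ b (θ k) = bs := by
      intro k
      exact ⟨(hφmem (ψ k)).1.1, (hφmem (ψ k)).2⟩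
    have hconv : Tendsto (fun k => x (θ k)) atTop (𝓝 xstar) := hψconv
    have habsstar : Norm.norm xstar = 1 := by
      have h1 : Tendsto (fun k => Norm.norm (x (θ k))) atTop (𝓝 (Norm.norm xstar)) :=
        (continuous_norm.continuousAt.tendsto).comp hconv
      have h2 : Tendsto (fun k => Norm.norm (x (θ k))) atTop (𝓝 1) :=
        ht.comp (hθmono.tendsto_atTop)
      exact tendsto_nhds_unique h1 h2
    have habsstar2 : Norm.norm (xstar - bs) = 1 := by
      have h1 : Tendsto (fun k => Norm.norm (x (θ k) - bs)) atTop
          (𝓝 (Norm.norm (xstar - bs))) := by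
        apply Tendsto.comp (continuous_norm.continuousAt.tendsto)
        exact hconv.sub tendsto_const_nhds
      have h2 : Tendsto (fun k => Norm.norm (x (θ k) - bs)) atTop (𝓝 1) := by
        have := htb.comp (hθmono.tendsto_atTop)
        refine this.congr fun k => ?_
        simp only [Function.comp_apply, (hθT k).2]
      exact tendsto_nhds_unique h1 h2
    have hfar : ∀ k, δ ≤ dist (x (θ k)) xstar := by
      intro k
      apply (hθT k).1 xstar habsstar
      rw [(hθT k).2]
      exact habsstar2
    have : ∀ᶠ k in atTop, dist (x (θ k)) xstar < δ := by
      have := (Metric.tendsto_atTop.mp hconv) δ hδ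
      obtain ⟨N, hN⟩ := this
      rw [eventually_atTop]
      exact ⟨N, fun k hk => hN k hk⟩
    obtain ⟨k, hk⟩ := this.exists
    exact absurd (hfar k) (not_le.mpr hk)
  -- choose nearest circle-intersection points
  have hSfin : ∀ n, {ξ : ℂ | Norm.norm ξ = 1 ∧ Norm.norm (ξ - b n) = 1}.Finite :=
    fun n => circle_inter_finite_aux (hb_ne n)
  have hξex : ∀ n : ℕ, ∃ ξ : ℂ,
      ({ξ' : ℂ | Norm.norm ξ' = 1 ∧ Norm.norm (ξ' - b n) = 1}.Nonempty →
        (Norm.norm ξ = 1 ∧ Norm.norm (ξ - b n) = 1) ∧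
        ∀ ζ : ℂ, Norm.norm ζ = 1 → Norm.norm (ζ - b n) = 1 →
          dist (x n) ξ ≤ dist (x n) ζ) := by
    intro n
    by_cases h : {ξ' : ℂ | Norm.norm ξ' = 1 ∧ Norm.norm (ξ' - b n) = 1}.Nonempty
    · obtain ⟨ξ, hξmem, hξmin⟩ := Set.exists_min_image _ (fun ξ => dist (x n) ξ) (hSfin n) h
      exact ⟨ξ, fun _ => ⟨hξmem, fun ζ h1 h2 => hξmin ζ ⟨h1, h2⟩⟩⟩
    · exact ⟨0, fun hne => absurd hne h⟩
  choose ξ hξ using hξex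
  have hclose : ∀ δ : ℝ, 0 < δ → ∀ᶠ n in atTop, dist (x n) (ξ n) < δ := by
    intro δ hδ
    filter_upwards [hD δ hδ] with n hn
    obtain ⟨ζ, h1, h2, h3⟩ := hn
    have hne : {ξ' : ℂ | Norm.norm ξ' = 1 ∧ Norm.norm (ξ' - b n) = 1}.Nonempty :=
      ⟨ζ, h1, h2⟩
    exact lt_of_le_of_lt ((hξ n hne).2 ζ h1 h2) h3
  have hξmem : ∀ᶠ n in atTop, Norm.norm (ξ n) = 1 ∧ Norm.norm (ξ n - b n) = 1 := by
    filter_upwards [hD 1 one_pos] with n hn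
    obtain ⟨ζ, h1, h2, _⟩ := hn
    exact (hξ n ⟨ζ, h1, h2⟩).1
  -- the global finite set and its gap
  set Ξall : Set ℂ := ⋃ β ∈ B', ({u : ℂ | Norm.norm u = 1 ∧ Norm.norm (u - β) = 1} ∪
      (fun ζ => (ζ - β)⁻¹) '' {u : ℂ | Norm.norm u = 1 ∧ Norm.norm (u - β) = 1}) with hΞdef
  have hΞfin : Ξall.Finite := by
    refine Set.Finite.biUnion hB'fin fun β hβ => ?_
    have hβne : β ≠ 0 := hβ.1.2
    exact (circle_inter_finite_aux hβne).union ((circle_inter_finite_aux hβne).image _)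
  obtain ⟨γ, hγpos, hγ⟩ := gap_lemma_aux hΞfin
  -- the key identity
  have hident : ∀ n, Norm.norm (ξ n - b n) = 1 →
      Norm.norm (x (n + 1) - (ξ n - b n)⁻¹) = dist (x n) (ξ n) * Norm.norm (x (n + 1)) := by
    intro n h1
    have hvne : ξ n - b n ≠ 0 := by
      intro h; rw [h] at h1; simp at h1
    have hid : x (n + 1) - (ξ n - b n)⁻¹ = (ξ n - x n) * x (n + 1) * (ξ n - b n)⁻¹ := by
      rw [hxrec n]
      rw [inv_sub_inv (hxb_ne n) hvne]
      field_simp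
      ring
    rw [hid, norm_mul, norm_mul, norm_inv, h1, inv_one, mul_one, Complex.dist_eq]
    congr 1
    exact norm_sub_rev _ _
  -- eventual matching
  have hshift : ∀ {P : ℕ → Prop}, (∀ᶠ n in atTop, P n) → ∀ᶠ n in atTop, P (n + 1) :=
    fun h => (tendsto_add_atTop_nat 1).eventually h
  have hmatch : ∀ᶠ n in atTop, ξ (n + 1) = (ξ n - b n)⁻¹ := by
    filter_upwards [hξmem, hshift hξmem, hbB', hshift hbB', hclose (γ/8) (by linarith),
      hshift (hclose (γ/8) (by linarith)), hshift hxev2] with n h1 h2 h3 h4 h5 h6 h7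
    have humem : (ξ n - b n)⁻¹ ∈ Ξall := by
      rw [hΞdef]
      refine Set.mem_biUnion h3 ?_
      right
      exact ⟨ξ n, ⟨h1.1, h1.2⟩, rfl⟩
    have hvmem : ξ (n + 1) ∈ Ξall := by
      rw [hΞdef]
      refine Set.mem_biUnion h4 ?_
      left
      exact ⟨h2.1, h2.2⟩
    have hd1 : dist ((ξ n - b n)⁻¹) (x (n + 1)) ≤ γ/4 := by
      rw [dist_comm, Complex.dist_eq, hident n h1.2]
      calc dist (x n) (ξ n) * Norm.norm (x (n + 1)) ≤ (γ/8) * 2 := by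
            have hnn : (0:ℝ) ≤ dist (x n) (ξ n) := dist_nonneg
            nlinarith [norm_nonneg (x (n + 1))]
        _ = γ/4 := by ring
    have hd2 : dist (x (n + 1)) (ξ (n + 1)) < γ/8 := h6
    have : dist ((ξ n - b n)⁻¹) (ξ (n + 1)) < γ := by
      calc dist ((ξ n - b n)⁻¹) (ξ (n + 1)) ≤
          dist ((ξ n - b n)⁻¹) (x (n + 1)) + dist (x (n + 1)) (ξ (n + 1)) := dist_triangle _ _ _
        _ < γ/4 + γ/8 := by linarith
        _ < γ := by linarith
    exact (hγ _ humem _ hvmem this).symm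
  -- growth and final contradiction
  have hgrow : ∀ᶠ n in atTop,
      (dist (x (n + 1)) (ξ (n + 1)) = dist (x n) (ξ n) * Norm.norm (x (n + 1))
        ∧ Norm.norm (ξ n) = 1) := by
    filter_upwards [hmatch, hξmem] with n h1 h2
    refine ⟨?_, h2.1⟩
    rw [Complex.dist_eq (x (n+1)), h1, hident n h2.2]
  rw [eventually_atTop] at hgrow
  obtain ⟨M, hM⟩ := hgrow
  have hpos : 0 < dist (x M) (ξ M) := by
    rw [dist_pos]
    intro h
    have h1 := hx1 M
    rw [h, (hM M le_rfl).2] at h1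
    exact lt_irrefl 1 h1
  have hmono : ∀ n, M ≤ n → dist (x M) (ξ M) ≤ dist (x n) (ξ n) := by
    intro n hn
    induction n, hn using Nat.le_induction with
    | base => exact le_refl _
    | succ n hn ih =>
      rw [(hM n hn).1]
      calc dist (x M) (ξ M) ≤ dist (x n) (ξ n) := ih
        _ ≤ dist (x n) (ξ n) * Norm.norm (x (n + 1)) :=
            le_mul_of_one_le_right dist_nonneg (le_of_lt (hx1 (n + 1)))
  obtain ⟨n, hn1, hn2⟩ := ((hclose _ hpos).and (eventually_ge_atTop M)).exists
  exact absurd (hmono n hn2) (not_le.mpr hn1)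

end Aux

open Filter Set Metric Topology in
/-- Proposition 2.7: existence of an infinite neat subset under any of the conditions
(i) `|q_{n-1}| ≤ |q_n|` for all `n`; (ii) `liminf |z_{n+1}| > 1`; (iii) the expansion is
given by an algorithm `f` with `|ζ - f ζ| < r` for all `ζ`, for some `r ∈ (0,1)`.
Moreover if (i) and (iii) both hold then all of `ℕ` is a neat subset. -/
theorem stmt_4 (Γ : Subring ℂ) (hdisc : DiscreteTopology Γ)
    (z : ℂ) (hz : z ∉ quotField Γ)
    (a zs p q : ℕ → ℂ) (hcf : IsCFE Γ z a zs) (hpq : IsQPair a p q) :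
    (((∀ n : ℕ, Norm.norm (q n) ≤ Norm.norm (q (n + 1)))
        ∨ (∃ α : ℝ, 1 < α ∧ ∀ᶠ n in Filter.atTop, α ≤ Norm.norm (zs (n + 1)))
        ∨ (∃ f : ℂ → ℂ, (∀ ζ : ℂ, f ζ ∈ Γ) ∧ (∀ n, a n = f (zs n)) ∧
            ∃ r : ℝ, 0 < r ∧ r < 1 ∧ ∀ ζ : ℂ, Norm.norm (ζ - f ζ) < r))
      → ∃ N : Set ℕ, N.Infinite ∧ IsNeat zs q N)
    ∧ (((∀ n : ℕ, Norm.norm (q n) ≤ Norm.norm (q (n + 1)))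
        ∧ (∃ f : ℂ → ℂ, (∀ ζ : ℂ, f ζ ∈ Γ) ∧ (∀ n, a n = f (zs n)) ∧
            ∃ r : ℝ, 0 < r ∧ r < 1 ∧ ∀ ζ : ℂ, Norm.norm (ζ - f ζ) < r))
      → IsNeat zs q Set.univ) := by
  classical
  obtain ⟨haΓ, hz0, habs, hrec⟩ := hcf
  obtain ⟨hp0, hp1, hprec, hq0, hq1, hqrec⟩ := hpq
  have hN0inf : {n : ℕ | Norm.norm (q n) ≤ Norm.norm (q (n + 1))}.Infinite :=
    qmono_infinite_aux Γ hdisc a q haΓ hq0 hq1 hqrec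
  have hbig : ∀ (r : ℝ), 0 < r → (∀ n, Norm.norm (zs n - a n) < r) →
      ∀ n, ¬ Norm.norm (zs (n + 1)) < r⁻¹ := by
    intro r hr hlt n
    have h1 : Norm.norm (zs (n + 1)) = (Norm.norm (zs n - a n))⁻¹ := by
      rw [hrec n, norm_inv]
    rw [h1, not_lt]
    exact inv_anti₀ (habs n).1 (le_of_lt (hlt n))
  constructor
  · rintro (hq | ⟨α, hα, hev⟩ | ⟨f, hfΓ, hfa, r, hr0, hr1, hfr⟩)
    · obtain ⟨ε, hε, hSinf⟩ := no_shrink_aux Γ hdisc a zs haΓ habs hrec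
      refine ⟨{n : ℕ | 1 + ε ≤ Norm.norm (zs (n + 1))}, hSinf,
        fun n _ => hq n, 1 + ε, by linarith, ?_⟩
      apply Set.Finite.subset Set.finite_empty
      rintro n ⟨hn1, hn2⟩
      exact absurd hn2 (not_lt.mpr hn1)
    · rw [Filter.eventually_atTop] at hev
      obtain ⟨M, hM⟩ := hev
      refine ⟨{n : ℕ | Norm.norm (q n) ≤ Norm.norm (q (n + 1))} \ {n : ℕ | n < M},
        hN0inf.diff (Set.finite_Iio M), fun n hn => hn.1, α, hα, ?_⟩
      apply Set.Finite.subset Set.finite_empty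
      rintro n ⟨⟨_, hn2⟩, hn3⟩
      have : M ≤ n := not_lt.mp hn2
      exact absurd hn3 (not_lt.mpr (hM n this))
    · have hltr : ∀ n, Norm.norm (zs n - a n) < r := by
        intro n; rw [hfa n]; exact hfr (zs n)
      refine ⟨{n : ℕ | Norm.norm (q n) ≤ Norm.norm (q (n + 1))}, hN0inf,
        fun n hn => hn, r⁻¹, (one_lt_inv₀ hr0).mpr hr1, ?_⟩
      apply Set.Finite.subset Set.finite_empty
      rintro n ⟨_, hn2⟩
      exact absurd hn2 (hbig r hr0 hltr n)
  · rintro ⟨hq, f, hfΓ, hfa, r, hr0, hr1, hfr⟩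
    have hltr : ∀ n, Norm.norm (zs n - a n) < r := by
      intro n; rw [hfa n]; exact hfr (zs n)
    refine ⟨fun n _ => hq n, r⁻¹, (one_lt_inv₀ hr0).mpr hr1, ?_⟩
    apply Set.Finite.subset Set.finite_empty
    rintro n ⟨_, hn2⟩
    exact absurd hn2 (hbig r hr0 hltr n)
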